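/- For every finite multigraph H with girth p and 2m directed edges (m undirected edge pairs), there exists a finite lift L of H of degree 2^{m+1} whose girth is strictly larger than p. Consequently, every finite graph with a cycle admits a sequence of finite lifts whose girths diverge to infinity. -/

import Mathlib

open SimpleGraph

namespace Stmt4Aux

variable {W : Type*} [DecidableEq W] {G : SimpleGraph W}

/-- Non-backtracking (internally) walk: consecutive darts don't reverse. -/
def NB {a b : W} (w : G.Walk a b) : Prop :=
  List.Chain' (fun d d' : G.Dart => d.toProd.1 ≠ d'.toProd.2) w.darts

lemma NB.of_cons {a x b : W} {h : G.Adj a x} {p : G.Walk x b}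
    (hw : NB (SimpleGraph.Walk.cons h p)) : NB p := by
  have := hw
  rw [NB, SimpleGraph.Walk.darts_cons] at this
  exact this.tail

lemma NB.length_ne_two {u : W} {w : G.Walk u u} (hw : NB w) : w.length ≠ 2 := by
  intro h2
  cases w with
  | nil => simp at h2
  | cons h q =>
    cases q with
    | nil => simp at h2
    | cons h' r =>
      cases r with
      | nil =>
        simp [NB, SimpleGraph.Walk.darts_cons, List.Chain'] at hw
      | cons h'' r' => simp only [SimpleGraph.Walk.length_cons] at h2; omega

/-- an edge incident to the start of a no-dup-support walk is its first edge -/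
lemma edge_start {x u y : W} (p : G.Walk x u) (hnd : p.support.Nodup)
    (he : s(x, y) ∈ p.edges) : ∃ (h : G.Adj x y) (q : G.Walk y u), p = SimpleGraph.Walk.cons h q := by
  cases p with
  | nil => simp at he
  | cons h' q =>
    rename_i z
    rw [SimpleGraph.Walk.support_cons, List.nodup_cons] at hnd
    rw [SimpleGraph.Walk.edges_cons, List.mem_cons] at he
    rcases he with he | he
    · rw [Sym2.eq_iff] at he
      rcases he with ⟨-, rfl⟩ | ⟨rfl, rfl⟩
      · exact ⟨h', q, rfl⟩
      · exact absurd q.start_mem_support hnd.1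
    · exact absurd (SimpleGraph.Walk.fst_mem_support_of_mem_edges q he) hnd.1

/-- A closed walk whose tail support has no duplicates, and which is
non-backtracking, is a cycle. -/
lemma isCycle_of_tail_nodup {u x : W} (h : G.Adj u x) (p : G.Walk x u)
    (hnd : p.support.Nodup) (hw : NB (SimpleGraph.Walk.cons h p)) :
    (SimpleGraph.Walk.cons h p).IsCycle := by
  rw [SimpleGraph.Walk.cons_isCycle_iff]
  refine ⟨SimpleGraph.Walk.IsPath.mk' hnd, fun he => ?_⟩
  -- consider the reverse walk, starting at u
  have hnd' : p.reverse.support.Nodup := by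
    rw [SimpleGraph.Walk.support_reverse, List.nodup_reverse]; exact hnd
  have he' : s(u, x) ∈ p.reverse.edges := by
    rw [SimpleGraph.Walk.edges_reverse, List.mem_reverse]; exact he
  obtain ⟨h2, q, hq⟩ := edge_start p.reverse hnd' he'
  -- q : G.Walk x x with nodup support, hence q = nil
  have hqnd : q.support.Nodup := by
    rw [hq, SimpleGraph.Walk.support_cons, List.nodup_cons] at hnd'
    exact hnd'.2
  cases q with
  | cons h3 t =>
    rw [SimpleGraph.Walk.support_cons, List.nodup_cons] at hqnd
    exact hqnd.1 t.end_mem_support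
  | nil =>
    have hlen : p.length = 1 := by
      have := congrArg SimpleGraph.Walk.length hq
      simpa using this
    exact hw.length_ne_two (by simp [hlen])

/-- From an internally non-backtracking walk with duplicated support, extract a cycle. -/
lemma exists_cycle_of_dup :
    ∀ (n : ℕ) {a b : W} (w : G.Walk a b), w.length ≤ n → NB w → ¬ w.support.Nodup →
    ∃ (y : W) (c : G.Walk y y), c.IsCycle ∧ c.length ≤ w.length := by
  intro n
  induction n with
  | zero =>
    intro a b w hl _ hnd
    cases w with
    | nil => simp at hnd
    | cons h p => simp at hl
  | succ n ih =>
    intro a b w hl hNB hnd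
    cases w with
    | nil => simp at hnd
    | cons h p =>
      rename_i x
      by_cases hp : p.support.Nodup
      · have ha : a ∈ p.support := by
          rw [SimpleGraph.Walk.support_cons, List.nodup_cons] at hnd
          by_contra hc
          exact hnd ⟨hc, hp⟩
        set q := p.takeUntil a ha with hqdef
        have hspec := p.take_spec ha
        have hqnd : q.support.Nodup := by
          have hpref : q.support <+: p.support := by
            refine ⟨(p.dropUntil a ha).support.tail, ?_⟩
            rw [← SimpleGraph.Walk.support_append, hspec]
          exact hpref.sublist.nodup hp
        have hNBc : NB (SimpleGraph.Walk.cons h q) := by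
          have h2 : NB (SimpleGraph.Walk.cons h (q.append (p.dropUntil a ha))) := by
            rwa [hspec]
          rw [NB, SimpleGraph.Walk.darts_cons, SimpleGraph.Walk.darts_append] at h2
          rw [NB, SimpleGraph.Walk.darts_cons]
          refine h2.prefix ?_
          refine ⟨(p.dropUntil a ha).darts, by simp⟩
        refine ⟨a, SimpleGraph.Walk.cons h q, isCycle_of_tail_nodup h q hqnd hNBc, ?_⟩
        simp only [SimpleGraph.Walk.length_cons]
        have hql := SimpleGraph.Walk.length_takeUntil_le p ha
        rw [← hqdef] at hql
        omega
      · have hlp : p.length ≤ n := by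
          simp only [SimpleGraph.Walk.length_cons] at hl; omega
        obtain ⟨y, c, hc, hlen⟩ := ih p hlp hNB.of_cons hp
        exact ⟨y, c, hc, by simp only [SimpleGraph.Walk.length_cons]; omega⟩

/-- sum of distinct signed powers of two, with exponents < m, is not divisible by 2^(m+1) -/
lemma sum_powers_not_dvd {m : ℕ} (l : List ℤ) (hne : l ≠ [])
    (h : ∀ x ∈ l, ∃ j, j < m ∧ (x = 2 ^ j ∨ x = -2 ^ j))
    (hnd : (l.map Int.natAbs).Nodup) :
    ¬ ((2 : ℤ) ^ (m + 1) ∣ l.sum) := by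
  intro hdvd
  have habs : ∀ x ∈ l, ∃ j, j < m ∧ x.natAbs = 2 ^ j := by
    intro x hx
    obtain ⟨j, hj, hx2⟩ := h x hx
    refine ⟨j, hj, ?_⟩
    rcases hx2 with rfl | rfl <;> simp [Int.natAbs_pow]
  -- |sum| ≤ sum of natAbs < 2^(m+1)
  have habs_le : ∀ l' : List ℤ, l'.sum.natAbs ≤ (l'.map Int.natAbs).sum := by
    intro l'
    induction l' with
    | nil => simp
    | cons x t iht =>
      simp only [List.sum_cons, List.map_cons]
      exact le_trans (Int.natAbs_add_le x t.sum) (by omega)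
  have hlnd : l.Nodup := hnd.of_map
  have hpowsum : ∀ n : ℕ, (∑ i ∈ Finset.range n, 2 ^ i) < 2 ^ n := by
    intro n
    induction n with
    | zero => simp
    | succ n ihn =>
      rw [Finset.sum_range_succ, pow_succ]
      omega
  have hsum_lt : (l.map Int.natAbs).sum < 2 ^ (m + 1) := by
    have h1 : (l.map Int.natAbs).toFinset.sum id = ((l.map Int.natAbs).map id).sum :=
      List.sum_toFinset _ hnd
    rw [List.map_id] at h1
    have hsub : (l.map Int.natAbs).toFinset ⊆ (Finset.range m).image (2 ^ ·) := by
      intro x hx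
      rw [List.mem_toFinset, List.mem_map] at hx
      obtain ⟨z, hz, rfl⟩ := hx
      obtain ⟨j, hj, hje⟩ := habs z hz
      rw [Finset.mem_image]
      exact ⟨j, Finset.mem_range.2 hj, hje.symm⟩
    have h2 : ((l.map Int.natAbs).toFinset.sum id) ≤ ∑ x ∈ (Finset.range m).image (2 ^ ·), x :=
      Finset.sum_le_sum_of_subset hsub
    have h3 : (∑ x ∈ (Finset.range m).image (2 ^ ·), x) = ∑ j ∈ Finset.range m, 2 ^ j := by
      rw [Finset.sum_image]
      intro a _ b _ hab
      exact Nat.pow_right_injective le_rfl hab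
    have h4 := hpowsum m
    have h5 : (2:ℕ) ^ m < 2 ^ (m+1) := by rw [pow_succ]; omega
    omega
  -- sum is nonzero
  have hsum_ne : l.sum ≠ 0 := by
    intro h0
    have htne : l.toFinset.Nonempty := by
      obtain ⟨x, hx⟩ := List.exists_mem_of_ne_nil l hne
      exact ⟨x, List.mem_toFinset.2 hx⟩
    obtain ⟨x₀, hx₀t, hmin⟩ := Finset.exists_min_image l.toFinset Int.natAbs htne
    have hx₀l : x₀ ∈ l := List.mem_toFinset.1 hx₀t
    obtain ⟨j₀, hj₀, hx₀a⟩ := habs x₀ hx₀l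
    have hinj := List.inj_on_of_nodup_map hnd
    have hdvd_rest : ∀ y ∈ l.toFinset.erase x₀, (2:ℤ) ^ (j₀ + 1) ∣ y := by
      intro y hy
      have hyne : y ≠ x₀ := (Finset.mem_erase.1 hy).1
      have hyl : y ∈ l := List.mem_toFinset.1 (Finset.mem_erase.1 hy).2
      obtain ⟨j, hj, hy2⟩ := h y hyl
      have hya : y.natAbs = 2 ^ j := by
        rcases hy2 with rfl | rfl <;> simp [Int.natAbs_pow]
      have hjne : j ≠ j₀ := by
        intro hjj
        subst hjj
        exact hyne (hinj hyl hx₀l (by rw [hya, hx₀a]))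
      have hjge : j₀ < j := by
        have h1 := hmin y (Finset.mem_erase.1 hy).2
        rw [hx₀a, hya] at h1
        have := (Nat.pow_le_pow_iff_right (by norm_num : 1 < 2)).1 h1
        omega
      have hdj : (2:ℤ) ^ (j₀+1) ∣ (2:ℤ) ^ j := pow_dvd_pow 2 hjge
      rcases hy2 with rfl | rfl
      · exact hdj
      · exact hdj.neg_right
    have hsum_fin : l.sum = ∑ y ∈ l.toFinset, y := by
      have h2 := List.sum_toFinset (id : ℤ → ℤ) hlnd
      rw [List.map_id] at h2
      exact h2.symm
    have hsplit : l.sum = x₀ + ∑ y ∈ l.toFinset.erase x₀, y := by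
      rw [hsum_fin, ← Finset.add_sum_erase _ (fun y : ℤ => y) hx₀t]
    have hdr : (2:ℤ) ^ (j₀+1) ∣ ∑ y ∈ l.toFinset.erase x₀, y :=
      Finset.dvd_sum hdvd_rest
    have hx₀dvd : (2:ℤ) ^ (j₀+1) ∣ x₀ := by
      have hxe : x₀ = l.sum - ∑ y ∈ l.toFinset.erase x₀, y := by rw [hsplit]; ring
      rw [hxe, h0, zero_sub]
      exact hdr.neg_right
    have hx₀ne : x₀ ≠ 0 := by
      intro hx
      rw [hx] at hx₀a
      simp only [Int.natAbs_zero] at hx₀a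
      exact (pow_ne_zero j₀ (by norm_num : (2:ℕ) ≠ 0)) hx₀a.symm
    have habs_dvd : (2:ℤ) ^ (j₀+1) ∣ |x₀| := (dvd_abs _ _).2 hx₀dvd
    have hle := Int.le_of_dvd (abs_pos.2 hx₀ne) habs_dvd
    rw [Int.abs_eq_natAbs, hx₀a] at hle
    have : ((2:ℕ) ^ j₀ : ℤ) < (2:ℤ)^(j₀+1) := by
      push_cast
      rw [pow_succ]
      have : (0:ℤ) < 2 ^ j₀ := by positivity
      linarith
    omega
  -- conclude
  have hge : (2:ℤ) ^ (m+1) ≤ |l.sum| := Int.le_of_dvd (abs_pos.2 hsum_ne) ((dvd_abs _ _).2 hdvd)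
  rw [Int.abs_eq_natAbs] at hge
  have h6 : (l.sum.natAbs : ℤ) ≤ ((l.map Int.natAbs).sum : ℤ) := by
    exact_mod_cast habs_le l
  have h7 : (((l.map Int.natAbs).sum : ℕ) : ℤ) < (2:ℤ)^(m+1) := by
    exact_mod_cast hsum_lt
  linarith



section Lift
variable {X : Type*}

lemma lift_adj (K : SimpleGraph X) {F : Type*} (π : X → X → Equiv.Perm F)
    (hπ : ∀ u v, π v u = (π u v)⁻¹) (p q : X × F) :
    (SimpleGraph.fromRel fun p q : X × F => K.Adj p.1 q.1 ∧ q.2 = π p.1 q.1 p.2).Adj p q ↔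
      (K.Adj p.1 q.1 ∧ q.2 = π p.1 q.1 p.2) := by
  rw [SimpleGraph.fromRel_adj]
  constructor
  · rintro ⟨hne, h | h⟩
    · exact h
    · refine ⟨h.1.symm, ?_⟩
      have h2 := h.2
      rw [hπ] at h2
      rw [h2]
      simp
  · intro hh
    refine ⟨?_, Or.inl hh⟩
    rintro rfl
    exact K.irrefl hh.1

lemma darts_map_toProd {X Y : Type*} {A : SimpleGraph X} {B : SimpleGraph Y} (f : A →g B)
    {a b : X} (w : A.Walk a b) :
    (w.map f).darts.map SimpleGraph.Dart.toProd
      = w.darts.map (fun d => (f d.toProd.1, f d.toProd.2)) := by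
  induction w with
  | nil => simp
  | cons h p ih =>
    rw [SimpleGraph.Walk.map_cons, SimpleGraph.Walk.darts_cons, SimpleGraph.Walk.darts_cons,
      List.map_cons, List.map_cons, ih]

end Lift

lemma perm_apply_inv_self {α : Type*} (σ : Equiv.Perm α) (x : α) : σ (σ⁻¹ x) = x :=
  Equiv.apply_symm_apply σ x

open Fin.CommRing in
/-- The core construction: a degree `2^(m+1)` lift with strictly larger girth. -/
lemma main_lift {W : Type*} [Fintype W] [DecidableEq W] (G : SimpleGraph W)
    [DecidableRel G.Adj] (hg : G.egirth ≠ ⊤) :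
    ∃ π : W → W → Equiv.Perm (Fin (2 ^ (G.edgeFinset.card + 1))),
      (∀ u v : W, π v u = (π u v)⁻¹) ∧
      G.egirth < (SimpleGraph.fromRel
        (fun p q : W × Fin (2 ^ (G.edgeFinset.card + 1)) =>
          G.Adj p.1 q.1 ∧ q.2 = π p.1 q.1 p.2)).egirth := by
  classical
  set m := G.edgeFinset.card with hm
  haveI : NeZero (2 ^ (m + 1)) := ⟨by positivity⟩
  -- edge indexing
  set f : Sym2 W → ℕ := fun e =>
    if h : e ∈ G.edgeFinset then ((G.edgeFinset.equivFin ⟨e, h⟩ : Fin m) : ℕ) else 0 with hf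
  have hflt : ∀ e ∈ G.edgeFinset, f e < m := by
    intro e he
    rw [hf]
    simp only [dif_pos he]
    exact (G.edgeFinset.equivFin ⟨e, he⟩).isLt
  have hfinj : ∀ e ∈ G.edgeFinset, ∀ e' ∈ G.edgeFinset, f e = f e' → e = e' := by
    intro e he e' he' hff
    rw [hf] at hff
    simp only [dif_pos he, dif_pos he'] at hff
    have h2 : G.edgeFinset.equivFin ⟨e, he⟩ = G.edgeFinset.equivFin ⟨e', he'⟩ := Fin.ext hff
    have h3 := G.edgeFinset.equivFin.injective h2
    exact congrArg Subtype.val h3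
  -- signed shifts
  set emb := Fintype.equivFin W with hemb
  set zsh : W → W → ℤ := fun u v =>
    if u = v then 0 else if emb u < emb v then 2 ^ (f s(u, v)) else -2 ^ (f s(u, v)) with hzsh
  have hzskew : ∀ u v, zsh v u = - zsh u v := by
    intro u v
    by_cases h : u = v
    · subst h; simp [hzsh]
    · have hne : emb u ≠ emb v := fun hh => h (emb.injective hh)
      rw [hzsh]
      simp only [if_neg h, if_neg (Ne.symm h)]
      rw [Sym2.eq_swap (a := v) (b := u)]
      rcases lt_or_gt_of_ne hne with hlt | hgt
      · rw [if_neg (not_lt.2 hlt.le), if_pos hlt]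
      · rw [if_pos hgt, if_neg (not_lt.2 hgt.le)]
        ring
  set sh : W → W → Fin (2 ^ (m + 1)) := fun u v => ((zsh u v : ℤ) : Fin (2 ^ (m + 1))) with hsh
  have hshskew : ∀ u v, sh v u = - sh u v := by
    intro u v
    rw [hsh]
    simp only [hzskew u v, Int.cast_neg]
  set π₀ : W → W → Equiv.Perm (Fin (2 ^ (m + 1))) := fun u v => Equiv.addLeft (sh u v) with hπ₀
  have hπs : ∀ u v, π₀ v u = (π₀ u v)⁻¹ := by
    intro u v
    rw [hπ₀]
    simp only [Equiv.neg_addLeft, hshskew u v]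
  set L := SimpleGraph.fromRel
    (fun p q : W × Fin (2 ^ (m + 1)) => G.Adj p.1 q.1 ∧ q.2 = π₀ p.1 q.1 p.2) with hL
  have hLadj : ∀ p q, L.Adj p q ↔ (G.Adj p.1 q.1 ∧ q.2 = sh p.1 q.1 + p.2) := by
    intro p q
    rw [hL, lift_adj G π₀ hπs]
    rw [hπ₀]
    simp [Equiv.coe_addLeft]
  refine ⟨π₀, hπs, ?_⟩
  rw [← hL]
  by_contra hcon
  push_neg at hcon
  have hLne : ¬ L.IsAcyclic := by
    intro hac
    exact hg (top_le_iff.1 (hac.egirth_eq_top ▸ hcon))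
  obtain ⟨s, w, hwc, hwlen⟩ := (SimpleGraph.exists_egirth_eq_length (G := L)).2 hLne
  -- projection homomorphism
  have hφadj : ∀ {p q : W × Fin (2 ^ (m + 1))}, L.Adj p q → G.Adj p.1 q.1 :=
    fun h => ((hLadj _ _).1 h).1
  let φ : L →g G := ⟨Prod.fst, hφadj⟩
  -- the chain condition upstairs
  have hchain : List.Chain' (fun d d' : L.Dart => d.toProd.1.1 ≠ d'.toProd.2.1) w.darts := by
    have h1 := SimpleGraph.Walk.isChain_dartAdj_darts w
    have h2 : List.Pairwise (fun d d' : L.Dart => d.edge ≠ d'.edge) w.darts := by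
      have hnd := hwc.isCircuit.isTrail.edges_nodup
      rw [SimpleGraph.Walk.edges] at hnd
      exact (List.pairwise_map.1 hnd)
    have h2' := h2.isChain
    show List.IsChain _ w.darts
    rw [List.isChain_iff_getElem] at h1 h2' ⊢
    intro i hi
    have hadj := h1 i hi
    have hne := h2' i hi
    intro heq
    apply hne
    set d := w.darts[i] with hd
    set d' := w.darts[i + 1] with hd'
    -- fibre computation : d'.snd = d.fst
    have hb1 := ((hLadj _ _).1 d.adj).2
    have hb2 := ((hLadj _ _).1 d'.adj).2
    rw [SimpleGraph.DartAdj] at hadj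
    -- d.snd = d'.fst
    have hsndfst : d'.toProd.2 = d.toProd.1 := by
      have h3 : d'.toProd.2.2 = sh d'.toProd.1.1 d'.toProd.2.1 + d'.toProd.1.2 := hb2
      rw [← hadj] at h3
      rw [← heq] at h3
      rw [hb1] at h3
      have h4 : sh d.toProd.2.1 d.toProd.1.1 = - sh d.toProd.1.1 d.toProd.2.1 := hshskew _ _
      rw [h4] at h3
      have h5 : d'.toProd.2.2 = d.toProd.1.2 := by rw [h3]; ring
      exact Prod.ext heq.symm h5
    show d.edge = d'.edge
    have hpair : d'.toProd = (d.toProd.2, d.toProd.1) := Prod.ext hadj.symm hsndfst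
    rw [SimpleGraph.Dart.edge, SimpleGraph.Dart.edge, hpair]
    exact Sym2.eq_swap
  -- projected walk is non-backtracking
  set Wm := w.map φ with hWm
  have hWNB : NB Wm := by
    rw [NB]
    have hiff := List.isChain_map (SimpleGraph.Dart.toProd (G := G))
      (R := fun p q : W × W => p.1 ≠ q.2) (l := Wm.darts)
    refine hiff.1 ?_
    rw [hWm, darts_map_toProd φ w, List.isChain_map]
    exact hchain
  -- telescoping sum upstairs
  have tele : ∀ {s t : W × Fin (2 ^ (m + 1))} (v : L.Walk s t),
      t.2 = (v.darts.map (fun d => sh d.toProd.1.1 d.toProd.2.1)).sum + s.2 := by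
    intro s t v
    induction v with
    | nil => simp
    | cons h p ih =>
      rw [SimpleGraph.Walk.darts_cons, List.map_cons, List.sum_cons]
      rw [ih]
      have hx := ((hLadj _ _).1 h).2
      rw [hx]
      ring
  have hsum0 : ((w.darts.map (fun d => sh d.toProd.1.1 d.toProd.2.1)).sum
      : Fin (2 ^ (m + 1))) = 0 := by
    have := tele w
    exact (right_eq_add.1 this)
  -- integer sum
  set lZ : List ℤ := Wm.darts.map (fun d => zsh d.toProd.1 d.toProd.2) with hlZ
  have hstep : (Wm.darts.map SimpleGraph.Dart.toProd).map (fun p : W × W => zsh p.1 p.2)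
      = Wm.darts.map (fun d => zsh d.toProd.1 d.toProd.2) := by
    rw [List.map_map]
    rfl
  have hlZ_eq : lZ = w.darts.map (fun d => zsh d.toProd.1.1 d.toProd.2.1) := by
    rw [hlZ, ← hstep, hWm, darts_map_toProd φ w, List.map_map]
    rfl
  have hcast : ((lZ.sum : ℤ) : Fin (2 ^ (m + 1))) = 0 := by
    rw [hlZ_eq]
    have h8 := map_list_sum (Int.castRingHom (Fin (2 ^ (m + 1))))
      (w.darts.map (fun d => zsh d.toProd.1.1 d.toProd.2.1))
    simp only [Int.coe_castRingHom] at h8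
    rw [h8, List.map_map]
    exact hsum0
  have hdvdZ : (2 : ℤ) ^ (m + 1) ∣ lZ.sum := by
    have := (CharP.intCast_eq_zero_iff (Fin (2 ^ (m + 1))) (2 ^ (m + 1)) lZ.sum).1 hcast
    have h2 : (((2 : ℕ) ^ (m + 1) : ℕ) : ℤ) = (2 : ℤ) ^ (m + 1) := by push_cast; ring
    rwa [h2] at this
  -- key case analysis on the projected walk
  have key : ∀ {a : W} (WW : G.Walk a a), NB WW → WW.length ≠ 0 →
      ((WW.length : ℕ∞) ≤ G.egirth) →
      ¬ ((2 : ℤ) ^ (m + 1) ∣ (WW.darts.map (fun d => zsh d.toProd.1 d.toProd.2)).sum) := by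
    intro a WW hNB hne0 hle hdvd
    cases WW with
    | nil => exact hne0 rfl
    | cons h p =>
      rename_i x
      by_cases hp : p.support.Nodup
      · have hcyc := isCycle_of_tail_nodup h p hp hNB
        have hdartadj : ∀ d ∈ (SimpleGraph.Walk.cons h p).darts, G.Adj d.toProd.1 d.toProd.2 :=
          fun d _ => d.adj
        refine sum_powers_not_dvd (m := m) _ ?_ ?_ ?_ hdvd
        · simp [SimpleGraph.Walk.darts_cons]
        · intro z hz
          rw [List.mem_map] at hz
          obtain ⟨d, hd, rfl⟩ := hz
          have hadj : G.Adj d.toProd.1 d.toProd.2 := d.adj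
          have hmem : d.edge ∈ G.edgeFinset := by
            rw [SimpleGraph.mem_edgeFinset]
            exact d.edge_mem
          refine ⟨f d.edge, hflt _ hmem, ?_⟩
          rw [hzsh]
          simp only [if_neg hadj.ne]
          have hedge : s(d.toProd.1, d.toProd.2) = d.edge := rfl
          rw [hedge]
          by_cases hlt : emb d.toProd.1 < emb d.toProd.2
          · left; rw [if_pos hlt]
          · right; rw [if_neg hlt]
        · have hmapabs : ((SimpleGraph.Walk.cons h p).darts.map
              (fun d => zsh d.toProd.1 d.toProd.2)).map Int.natAbs
              = (SimpleGraph.Walk.cons h p).edges.map (fun e => 2 ^ (f e)) := by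
            rw [List.map_map, SimpleGraph.Walk.edges, List.map_map]
            apply List.map_congr_left
            intro d hd
            have hadj : G.Adj d.toProd.1 d.toProd.2 := d.adj
            simp only [Function.comp_apply]
            rw [hzsh]
            simp only [if_neg hadj.ne]
            have hedge : s(d.toProd.1, d.toProd.2) = d.edge := rfl
            rw [hedge]
            by_cases hlt : emb d.toProd.1 < emb d.toProd.2
            · rw [if_pos hlt]; simp [Int.natAbs_pow]
            · rw [if_neg hlt]; simp [Int.natAbs_pow]
          rw [hmapabs]
          have hednd := hcyc.isCircuit.isTrail.edges_nodup
          refine hednd.map_on ?_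
          intro e he e' he' hee
          have hmeme : e ∈ G.edgeFinset := by
            rw [SimpleGraph.mem_edgeFinset]
            exact SimpleGraph.Walk.edges_subset_edgeSet _ he
          have hmeme' : e' ∈ G.edgeFinset := by
            rw [SimpleGraph.mem_edgeFinset]
            exact SimpleGraph.Walk.edges_subset_edgeSet _ he'
          have hff : f e = f e' := Nat.pow_right_injective le_rfl hee
          exact hfinj e hmeme e' hmeme' hff
      · obtain ⟨y, c, hc, hclen⟩ := exists_cycle_of_dup p.length p le_rfl hNB.of_cons hp
        have hgle : G.egirth ≤ c.length := SimpleGraph.le_egirth.1 le_rfl y c hc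
        have h1 : ((SimpleGraph.Walk.cons h p).length : ℕ∞) ≤ (c.length : ℕ∞) :=
          le_trans hle hgle
        have h2 : (SimpleGraph.Walk.cons h p).length ≤ c.length := Nat.cast_le.1 h1
        rw [SimpleGraph.Walk.length_cons] at h2
        omega
  -- apply
  have hlen_ne0 : Wm.length ≠ 0 := by
    rw [hWm, SimpleGraph.Walk.length_map]
    have := hwc.three_le_length
    omega
  have hlen_le : (Wm.length : ℕ∞) ≤ G.egirth := by
    rw [hWm, SimpleGraph.Walk.length_map]
    rw [← hwlen]
    exact hcon
  exact key Wm hWNB hlen_ne0 hlen_le (hlZ ▸ hdvdZ)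


lemma egirth_le_iso {α β : Type*} {A : SimpleGraph α} {B : SimpleGraph β} (e : A ≃g B) :
    A.egirth ≤ B.egirth := by
  by_cases hB : B.IsAcyclic
  · rw [hB.egirth_eq_top]; exact le_top
  · obtain ⟨b, w, hw, hlen⟩ := (SimpleGraph.exists_egirth_eq_length (G := B)).2 hB
    have hinj : Function.Injective (e.symm.toHom) := e.symm.toEquiv.injective
    have hcyc : (w.map e.symm.toHom).IsCycle := hw.map hinj
    have h1 : A.egirth ≤ ((w.map e.symm.toHom).length : ℕ∞) :=
      SimpleGraph.le_egirth.1 le_rfl _ _ hcyc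
    rw [SimpleGraph.Walk.length_map] at h1
    rw [hlen]
    exact h1

lemma egirth_eq_iso {α β : Type*} {A : SimpleGraph α} {B : SimpleGraph β} (e : A ≃g B) :
    A.egirth = B.egirth :=
  le_antisymm (egirth_le_iso e) (egirth_le_iso e.symm)

lemma compose_lift {V : Type*} (H : SimpleGraph V) {N N' : ℕ}
    (π : V → V → Equiv.Perm (Fin N)) (hπ : ∀ u v, π v u = (π u v)⁻¹)
    (π' : (V × Fin N) → (V × Fin N) → Equiv.Perm (Fin N'))
    (hπ' : ∀ u v, π' v u = (π' u v)⁻¹) :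
    ∃ PP : V → V → Equiv.Perm (Fin (N * N')),
      (∀ u v, PP v u = (PP u v)⁻¹) ∧
      (SimpleGraph.fromRel (fun p q : V × Fin (N * N') =>
          H.Adj p.1 q.1 ∧ q.2 = PP p.1 q.1 p.2)).egirth
        = (SimpleGraph.fromRel (fun p q : (V × Fin N) × Fin N' =>
            (SimpleGraph.fromRel (fun p q : V × Fin N =>
              H.Adj p.1 q.1 ∧ q.2 = π p.1 q.1 p.2)).Adj p.1 q.1 ∧ q.2 = π' p.1 q.1 p.2)).egirth := by
  set σ : V → V → Equiv.Perm (Fin N × Fin N') := fun u v =>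
    Equiv.prodShear (π u v) (fun i => π' (u, i) (v, π u v i)) with hσ
  have hσapp : ∀ u v (i : Fin N) (j : Fin N'),
      σ u v (i, j) = (π u v i, π' (u, i) (v, π u v i) j) := by
    intro u v i j
    rfl
  have hσmul : ∀ u v, σ u v * σ v u = 1 := by
    intro u v
    apply Equiv.ext
    rintro ⟨i, j⟩
    rw [Equiv.Perm.mul_apply, hσapp, hσapp]
    have hk : π u v (π v u i) = i := by
      rw [hπ u v]
      exact perm_apply_inv_self _ _
    rw [hk]
    rw [hπ' (u, π v u i) (v, i)]
    rw [perm_apply_inv_self]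
    rfl
  have hσskew : ∀ u v, σ v u = (σ u v)⁻¹ := fun u v =>
    eq_inv_of_mul_eq_one_right (hσmul u v)
  have hpc : ∀ p : Equiv.Perm (Fin N × Fin N'),
      (finProdFinEquiv.permCongr p)⁻¹ = finProdFinEquiv.permCongr p⁻¹ := by
    intro p
    symm
    apply eq_inv_of_mul_eq_one_right
    apply Equiv.ext
    intro x
    rw [Equiv.Perm.mul_apply, Equiv.permCongr_apply, Equiv.permCongr_apply,
      Equiv.symm_apply_apply, perm_apply_inv_self, Equiv.apply_symm_apply,
      Equiv.Perm.one_apply]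
  set P0 : V → V → Equiv.Perm (Fin (N * N')) := fun u v =>
    finProdFinEquiv.permCongr (σ u v) with hP0
  have hPs : ∀ u v, P0 v u = (P0 u v)⁻¹ := by
    intro u v
    rw [hP0]
    simp only
    rw [hσskew u v, ← hpc]
  refine ⟨P0, hPs, ?_⟩
  -- the isomorphism
  set ψ : (V × Fin N) × Fin N' ≃ V × Fin (N * N') :=
    (Equiv.prodAssoc V (Fin N) (Fin N')).trans ((Equiv.refl V).prodCongr finProdFinEquiv) with hψ
  have hψapp : ∀ (u : V) (i : Fin N) (j : Fin N'),
      ψ ((u, i), j) = (u, finProdFinEquiv (i, j)) := fun u i j => rfl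
  -- adjacency correspondence
  have hGadj := lift_adj H π hπ
  have hG'adj := lift_adj (SimpleGraph.fromRel (fun p q : V × Fin N =>
    H.Adj p.1 q.1 ∧ q.2 = π p.1 q.1 p.2)) π' hπ'
  have hAadj := lift_adj H P0 hPs
  have e0 : (SimpleGraph.fromRel (fun p q : (V × Fin N) × Fin N' =>
        (SimpleGraph.fromRel (fun p q : V × Fin N =>
          H.Adj p.1 q.1 ∧ q.2 = π p.1 q.1 p.2)).Adj p.1 q.1 ∧ q.2 = π' p.1 q.1 p.2)) ≃g
      (SimpleGraph.fromRel (fun p q : V × Fin (N * N') =>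
        H.Adj p.1 q.1 ∧ q.2 = P0 p.1 q.1 p.2)) := by
    refine ⟨ψ, ?_⟩
    rintro ⟨⟨u, i⟩, j⟩ ⟨⟨v, i'⟩, j'⟩
    rw [hψapp, hψapp]
    rw [hAadj, hG'adj]
    simp only [hGadj]
    constructor
    · rintro ⟨hH, heq⟩
      have hPapp : P0 u v (finProdFinEquiv (i, j)) = finProdFinEquiv (σ u v (i, j)) := by
        rw [hP0]
        simp [Equiv.permCongr_apply]
      rw [hPapp, hσapp] at heq
      have heq2 := finProdFinEquiv.injective heq
      rw [Prod.ext_iff] at heq2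
      obtain ⟨h1, h2⟩ := heq2
      simp only at h1 h2
      subst h1
      exact ⟨⟨hH, rfl⟩, h2⟩
    · rintro ⟨⟨hH, rfl⟩, h2⟩
      refine ⟨hH, ?_⟩
      have hPapp : P0 u v (finProdFinEquiv (i, j)) = finProdFinEquiv (σ u v (i, j)) := by
        rw [hP0]
        simp [Equiv.permCongr_apply]
      rw [hPapp, hσapp]
      rw [h2]

  exact (egirth_eq_iso e0).symm

end Stmt4Aux

open Stmt4Aux

/-- Every finite graph `H` with `m` (undirected) edges and finite girth admits
a lift of degree `2^(m+1)` — given by permutations `π u v` on the fibres with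
`π v u = (π u v)⁻¹` — whose girth is strictly larger; consequently for every `k` there is a
finite lift of `H` of girth exceeding `k`, i.e. `H` admits lifts of divergent girth. -/
theorem stmt_4 {V : Type*} [Fintype V] [DecidableEq V] (H : SimpleGraph V)
    [DecidableRel H.Adj] (hgirth : H.egirth ≠ ⊤) (m : ℕ)
    (hm : H.edgeFinset.card = m) :
    (∃ π : V → V → Equiv.Perm (Fin (2 ^ (m + 1))),
      (∀ u v : V, π v u = (π u v)⁻¹) ∧
      H.egirth <
        (SimpleGraph.fromRel
          (fun p q : V × Fin (2 ^ (m + 1)) =>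
            H.Adj p.1 q.1 ∧ q.2 = π p.1 q.1 p.2)).egirth) ∧
    (∀ k : ℕ, ∃ (N : ℕ) (π : V → V → Equiv.Perm (Fin N)),
      (∀ u v : V, π v u = (π u v)⁻¹) ∧
      (k : ℕ∞) <
        (SimpleGraph.fromRel
          (fun p q : V × Fin N => H.Adj p.1 q.1 ∧ q.2 = π p.1 q.1 p.2)).egirth) := by
  constructor
  · subst hm
    exact main_lift H hgirth
  · intro k
    induction k with
    | zero =>
      refine ⟨1, fun _ _ => 1, fun _ _ => inv_one.symm, ?_⟩
      exact lt_of_lt_of_le (by norm_num) SimpleGraph.three_le_egirth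
    | succ k ih =>
      obtain ⟨N, π, hπs, hk⟩ := ih
      by_cases htop : (SimpleGraph.fromRel
          (fun p q : V × Fin N => H.Adj p.1 q.1 ∧ q.2 = π p.1 q.1 p.2)).egirth = ⊤
      · exact ⟨N, π, hπs, by rw [htop]; exact ENat.coe_lt_top _⟩
      · haveI : DecidableRel (SimpleGraph.fromRel
            (fun p q : V × Fin N => H.Adj p.1 q.1 ∧ q.2 = π p.1 q.1 p.2)).Adj :=
          Classical.decRel _
        obtain ⟨π', hπ's, hlt⟩ := main_lift _ htop
        obtain ⟨PP, hPs, hegeq⟩ := compose_lift H π hπs π' hπ's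
        refine ⟨N * 2 ^ ((SimpleGraph.fromRel
          (fun p q : V × Fin N =>
            H.Adj p.1 q.1 ∧ q.2 = π p.1 q.1 p.2)).edgeFinset.card + 1), PP, hPs, ?_⟩
        rw [hegeq]
        have h1 : ((k : ℕ∞) + 1) ≤ (SimpleGraph.fromRel
            (fun p q : V × Fin N => H.Adj p.1 q.1 ∧ q.2 = π p.1 q.1 p.2)).egirth := by
          rw [ENat.add_one_le_iff (ENat.coe_ne_top k)]
          exact hk
        have h2 : ((k + 1 : ℕ) : ℕ∞) = (k : ℕ∞) + 1 := by push_cast; ring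
        rw [h2]
        exact lt_of_le_of_lt h1 hlt
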